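/- Let f : ℝᵈ → ℝ be continuously differentiable and let (x, m, v) : (0,∞) → ℝᵈ × ℝᵈ × ℝᵈ be a differentiable solution of the Adam ODE system such that every entry of v(t) is strictly positive for all t > 0. Define the Lyapunov function E(t) = f(x(t)) + (η/(2(1−α))) ⟨m(t), g_t(m(t), v(t))⟩. Then E is differentiable on (0,∞) and E'(t) ≤ −η ψ(t) ⟨m(t), g_t(m(t), v(t))⟩ for every t > 0, where ψ(t) = 1 − (1−β)/(4(1−α)) + (1/2) · 1/(e^{(1−α)t} − 1) − ((1−β)/(4(1−α))) · 1/(e^{(1−β)t} − 1). (Lyapunov descent inequality of Theorem 1 in the Dirac-measure case, where the AdamFlow solution is δ_{(x(t),m(t),v(t))} by Proposition 1.) -/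

import Mathlib

open MeasureTheory Filter
open scoped RealInnerProductSpace

set_option maxHeartbeats 2000000


section AuxLemmas

lemma expAux (a t : ℝ) : HasDerivAt (fun s => 1 - Real.exp (-a * s)) (a * Real.exp (-a * t)) t := by
  have h := ((Real.hasDerivAt_exp (-a * t)).comp t ((hasDerivAt_id t).const_mul (-a)))
  have h2 := h.const_sub 1
  exact h2.congr_deriv (by ring)

lemma inv_exp_sub_one (a t : ℝ) (ha : 0 < a) (ht : 0 < t) :
    1 / (Real.exp (a * t) - 1) = Real.exp (-a * t) / (1 - Real.exp (-a * t)) := by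
  have h1 : 1 < Real.exp (a * t) := Real.one_lt_exp_iff.2 (by positivity)
  have h2 : Real.exp (-a * t) < 1 := Real.exp_lt_one_iff.2 (by nlinarith)
  have h3 : Real.exp (-a * t) * Real.exp (a * t) = 1 := by
    rw [← Real.exp_add]
    norm_num
  rw [div_eq_div_iff (by linarith) (by linarith)]
  nlinarith [h3]

end AuxLemmas

/-- The Adam update direction `g_t(m, v)`, defined coordinatewise by
`g_t(m,v)_i = (m_i/(1−e^{−(1−α)t})) / (√(v_i/(1−e^{−(1−β)t})) + ε)`. -/
noncomputable def adamG (α β ε : ℝ) (d : ℕ) (t : ℝ) (m v : EuclideanSpace ℝ (Fin d)) :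
    EuclideanSpace ℝ (Fin d) :=
  WithLp.toLp 2 fun i => (m i / (1 - Real.exp (-(1 - α) * t))) /
    (Real.sqrt (v i / (1 - Real.exp (-(1 - β) * t))) + ε)

/-- Coordinatewise square of a vector. -/
noncomputable def vsq (d : ℕ) (w : EuclideanSpace ℝ (Fin d)) : EuclideanSpace ℝ (Fin d) :=
  WithLp.toLp 2 fun i => (w i) ^ 2

lemma adam_coord_hasDerivAt (a b ε t : ℝ) (ha : 0 < a) (hb : 0 < b) (hε : 0 < ε) (ht : 0 < t)
    (mi vi : ℝ → ℝ) (M' V' : ℝ)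
    (hmi : HasDerivAt mi M' t) (hvi : HasDerivAt vi V' t) (hV : 0 < vi t) :
    HasDerivAt (fun s => mi s * ((mi s / (1 - Real.exp (-a * s))) /
        (Real.sqrt (vi s / (1 - Real.exp (-b * s))) + ε)))
      (2 * mi t * M' / ((1 - Real.exp (-a * t)) * (Real.sqrt (vi t / (1 - Real.exp (-b * t))) + ε))
        - (mi t) ^ 2 * (a * Real.exp (-a * t)) /
            ((1 - Real.exp (-a * t)) ^ 2 * (Real.sqrt (vi t / (1 - Real.exp (-b * t))) + ε))
        - (mi t) ^ 2 * ((V' * (1 - Real.exp (-b * t)) - vi t * (b * Real.exp (-b * t))) /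
              (1 - Real.exp (-b * t)) ^ 2) /
            (2 * Real.sqrt (vi t / (1 - Real.exp (-b * t))) * (1 - Real.exp (-a * t)) *
              (Real.sqrt (vi t / (1 - Real.exp (-b * t))) + ε) ^ 2)) t := by
  have hea1 : Real.exp (-a * t) < 1 := Real.exp_lt_one_iff.2 (by nlinarith)
  have heb1 : Real.exp (-b * t) < 1 := Real.exp_lt_one_iff.2 (by nlinarith)
  have hcα : (0:ℝ) < 1 - Real.exp (-a * t) := by linarith
  have hcβ : (0:ℝ) < 1 - Real.exp (-b * t) := by linarith
  have hca := expAux a t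
  have hcb := expAux b t
  have hq := hmi.div hca hcα.ne'
  have hu := hvi.div hcb hcβ.ne'
  have hu0 : (0:ℝ) < vi t / (1 - Real.exp (-b * t)) := by positivity
  have hS : HasDerivAt (fun s => Real.sqrt (vi s / (1 - Real.exp (-b * s))))
      (1 / (2 * Real.sqrt (vi t / (1 - Real.exp (-b * t)))) *
        ((V' * (1 - Real.exp (-b * t)) - vi t * (b * Real.exp (-b * t))) /
          (1 - Real.exp (-b * t)) ^ 2)) t :=
    (Real.hasDerivAt_sqrt hu0.ne').comp t hu
  have hS0 : (0:ℝ) < Real.sqrt (vi t / (1 - Real.exp (-b * t))) := Real.sqrt_pos.2 hu0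
  have hP := hS.add_const ε
  have hP0 : (0:ℝ) < Real.sqrt (vi t / (1 - Real.exp (-b * t))) + ε := by positivity
  have hg := hq.div hP hP0.ne'
  have h := hmi.mul hg
  refine h.congr_deriv ?_
  simp only [Pi.div_apply]
  set ea := Real.exp (-a * t) with hea
  set eb := Real.exp (-b * t) with heb
  set S := Real.sqrt (vi t / (1 - eb)) with hSdef
  have h1 : (1:ℝ) - ea ≠ 0 := hcα.ne'
  have h2 : (1:ℝ) - eb ≠ 0 := hcβ.ne'
  have h3 : S ≠ 0 := hS0.ne'
  have h4 : S + ε ≠ 0 := hP0.ne'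
  field_simp
  ring

lemma adam_coord_bound (ηv a b ε t M V Gi : ℝ)
    (hη : 0 < ηv) (ha : 0 < a) (hb : 0 < b) (hε : 0 < ε) (ht : 0 < t) (hV : 0 < V) :
    Gi * (-ηv * ((M / (1 - Real.exp (-a * t))) / (Real.sqrt (V / (1 - Real.exp (-b * t))) + ε)))
      + (ηv / (2 * a)) *
        (2 * M * (a * (Gi - M)) / ((1 - Real.exp (-a * t)) *
            (Real.sqrt (V / (1 - Real.exp (-b * t))) + ε))
          - M ^ 2 * (a * Real.exp (-a * t)) /
              ((1 - Real.exp (-a * t)) ^ 2 * (Real.sqrt (V / (1 - Real.exp (-b * t))) + ε))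
          - M ^ 2 * ((b * (Gi ^ 2 - V) * (1 - Real.exp (-b * t))
                  - V * (b * Real.exp (-b * t))) / (1 - Real.exp (-b * t)) ^ 2) /
              (2 * Real.sqrt (V / (1 - Real.exp (-b * t))) * (1 - Real.exp (-a * t)) *
                (Real.sqrt (V / (1 - Real.exp (-b * t))) + ε) ^ 2))
    ≤ -ηv * (1 - b / (4 * a)
          + (1 / 2) * (Real.exp (-a * t) / (1 - Real.exp (-a * t)))
          - (b / (4 * a)) * (Real.exp (-b * t) / (1 - Real.exp (-b * t))))
        * (M * ((M / (1 - Real.exp (-a * t))) / (Real.sqrt (V / (1 - Real.exp (-b * t))) + ε))) := by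
  have hea1 : Real.exp (-a * t) < 1 := Real.exp_lt_one_iff.2 (by nlinarith)
  have heb1 : Real.exp (-b * t) < 1 := Real.exp_lt_one_iff.2 (by nlinarith)
  set ea := Real.exp (-a * t) with hea
  set eb := Real.exp (-b * t) with heb
  have hea0 : 0 < ea := Real.exp_pos _
  have heb0 : 0 < eb := Real.exp_pos _
  have hcα : (0:ℝ) < 1 - ea := by linarith
  have hcβ : (0:ℝ) < 1 - eb := by linarith
  set S := Real.sqrt (V / (1 - eb)) with hSdef
  have hS0 : 0 < S := Real.sqrt_pos.2 (by positivity)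
  have hS2 : S ^ 2 = V / (1 - eb) := Real.sq_sqrt (by positivity)
  have hVeq : V = S ^ 2 * (1 - eb) := by rw [hS2]; field_simp
  have hP0 : (0:ℝ) < S + ε := by positivity
  have hSP : S ≤ S + ε := by linarith
  set K := M ^ 2 / ((1 - ea) * (S + ε)) with hKdef
  have hK : 0 ≤ K := by positivity
  set q := eb / (1 - eb) with hq
  have hq0 : 0 ≤ q := by positivity
  -- the key estimate on the v-derivative term
  have hneg : -(M ^ 2 * ((b * (Gi ^ 2 - V) * (1 - eb) - V * (b * eb)) / (1 - eb) ^ 2) /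
        (2 * S * (1 - ea) * (S + ε) ^ 2)) ≤ (b * (1 + q) / 2) * K := by
    have h1 : -((b * (Gi ^ 2 - V) * (1 - eb) - V * (b * eb)) / (1 - eb) ^ 2)
        = b * S ^ 2 * (1 + q) - b * Gi ^ 2 / (1 - eb) := by
      rw [hVeq, hq]
      field_simp
      ring
    calc -(M ^ 2 * ((b * (Gi ^ 2 - V) * (1 - eb) - V * (b * eb)) / (1 - eb) ^ 2) /
            (2 * S * (1 - ea) * (S + ε) ^ 2))
        = M ^ 2 * (-((b * (Gi ^ 2 - V) * (1 - eb) - V * (b * eb)) / (1 - eb) ^ 2)) /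
            (2 * S * (1 - ea) * (S + ε) ^ 2) := by ring
      _ = M ^ 2 * (b * S ^ 2 * (1 + q) - b * Gi ^ 2 / (1 - eb)) /
            (2 * S * (1 - ea) * (S + ε) ^ 2) := by rw [h1]
      _ ≤ M ^ 2 * (b * S ^ 2 * (1 + q)) / (2 * S * (1 - ea) * (S + ε) ^ 2) := by
            gcongr
            have : 0 ≤ b * Gi ^ 2 / (1 - eb) := by positivity
            linarith
      _ = (b * (1 + q) / 2) * (M ^ 2 * S / ((1 - ea) * (S + ε) ^ 2)) := by
            field_simp
      _ ≤ (b * (1 + q) / 2) * (M ^ 2 * (S + ε) / ((1 - ea) * (S + ε) ^ 2)) := by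
            gcongr
      _ = (b * (1 + q) / 2) * K := by
            rw [hKdef]
            field_simp
  have hid : Gi * (-ηv * ((M / (1 - ea)) / (S + ε)))
      + (ηv / (2 * a)) *
        (2 * M * (a * (Gi - M)) / ((1 - ea) * (S + ε))
          - M ^ 2 * (a * ea) / ((1 - ea) ^ 2 * (S + ε))
          - M ^ 2 * ((b * (Gi ^ 2 - V) * (1 - eb) - V * (b * eb)) / (1 - eb) ^ 2) /
              (2 * S * (1 - ea) * (S + ε) ^ 2))
      = -ηv * K - (ηv / 2) * (ea / (1 - ea)) * K
        - (ηv / (2 * a)) * (M ^ 2 * ((b * (Gi ^ 2 - V) * (1 - eb) - V * (b * eb)) / (1 - eb) ^ 2) /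
            (2 * S * (1 - ea) * (S + ε) ^ 2)) := by
    rw [hKdef]
    field_simp
    ring
  have hid2 : -ηv * (1 - b / (4 * a) + (1 / 2) * (ea / (1 - ea)) - (b / (4 * a)) * q)
        * (M * ((M / (1 - ea)) / (S + ε)))
      = -ηv * K - (ηv / 2) * (ea / (1 - ea)) * K + (ηv * b / (4 * a)) * (1 + q) * K := by
    rw [hKdef, hq]
    field_simp
    ring
  rw [hid, hid2]
  have h2 := mul_le_mul_of_nonneg_left hneg (by positivity : (0:ℝ) ≤ ηv / (2 * a))
  have h3 : (ηv / (2 * a)) * ((b * (1 + q) / 2) * K) = (ηv * b / (4 * a)) * (1 + q) * K := by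
    field_simp
    ring
  linarith


/-- **Lyapunov descent inequality of Theorem 1 in the Dirac-measure case.** Along a
differentiable solution `(x, m, v)` of the Adam ODE with `v(t)` entrywise strictly positive,
the Lyapunov function `E(t) = f(x(t)) + (η/(2(1−α)))⟨m(t), g_t(m(t), v(t))⟩` is
differentiable on `(0,∞)` with
`E'(t) ≤ −η ψ(t)⟨m(t), g_t(m(t), v(t))⟩`, where
`ψ(t) = 1 − (1−β)/(4(1−α)) + (1/2)·1/(e^{(1−α)t} − 1) − ((1−β)/(4(1−α)))·1/(e^{(1−β)t} − 1)`. -/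

theorem lyapunov_descent_dirac
    (d : ℕ) (α β ε η : ℝ)
    (hα : α ∈ Set.Ico (0 : ℝ) 1) (hβ : β ∈ Set.Ico (0 : ℝ) 1) (hε : 0 < ε) (hη : 0 < η)
    (f : EuclideanSpace ℝ (Fin d) → ℝ) (hf : ContDiff ℝ 1 f)
    (x m v : ℝ → EuclideanSpace ℝ (Fin d))
    (hvpos : ∀ t > (0 : ℝ), ∀ i, 0 < v t i)
    (hm : ∀ t > (0 : ℝ), HasDerivAt m ((1 - α) • (gradient f (x t) - m t)) t)
    (hv : ∀ t > (0 : ℝ), HasDerivAt v ((1 - β) • (vsq d (gradient f (x t)) - v t)) t)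
    (hx : ∀ t > (0 : ℝ), HasDerivAt x ((-η) • adamG α β ε d t (m t) (v t)) t) :
    ∀ t > (0 : ℝ), ∃ D : ℝ,
      HasDerivAt (fun s => f (x s) + (η / (2 * (1 - α))) * ⟪m s, adamG α β ε d s (m s) (v s)⟫)
        D t ∧
      D ≤ -η * (1 - (1 - β) / (4 * (1 - α))
            + (1 / 2) * (1 / (Real.exp ((1 - α) * t) - 1))
            - ((1 - β) / (4 * (1 - α))) * (1 / (Real.exp ((1 - β) * t) - 1)))
          * ⟪m t, adamG α β ε d t (m t) (v t)⟫ := by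
  intro t ht
  have hα1 : (0:ℝ) < 1 - α := by linarith [hα.2]
  have hβ1 : (0:ℝ) < 1 - β := by linarith [hβ.2]
  have hfd : HasDerivAt (fun s => f (x s))
      (⟪gradient f (x t), (-η) • adamG α β ε d t (m t) (v t)⟫) t := by
    have hd : DifferentiableAt ℝ f (x t) := (hf.differentiable one_ne_zero).differentiableAt
    have h := hd.hasGradientAt.hasFDerivAt.comp_hasDerivAt t (hx t ht)
    exact h
  set G := gradient f (x t) with hG
  -- coordinate derivatives of m and v
  have hmc : ∀ i : Fin d, HasDerivAt (fun s => m s i) ((1 - α) * (G i - m t i)) t := by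
    intro i
    have h := (EuclideanSpace.proj (𝕜 := ℝ) i).hasFDerivAt.comp_hasDerivAt t (hm t ht)
    have h2 : (EuclideanSpace.proj (𝕜 := ℝ) i) ((1 - α) • (G - m t)) = (1 - α) * (G i - m t i) := by
      simp
    rw [h2] at h
    exact h
  have hvc : ∀ i : Fin d, HasDerivAt (fun s => v s i) ((1 - β) * ((G i) ^ 2 - v t i)) t := by
    intro i
    have h := (EuclideanSpace.proj (𝕜 := ℝ) i).hasFDerivAt.comp_hasDerivAt t (hv t ht)
    have h2 : (EuclideanSpace.proj (𝕜 := ℝ) i) ((1 - β) • (vsq d G - v t))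
        = (1 - β) * ((G i) ^ 2 - v t i) := by
      simp [vsq]
    rw [h2] at h
    exact h
  -- coordinatewise derivative of the inner-product summands
  set Di : Fin d → ℝ := fun i =>
    2 * m t i * ((1 - α) * (G i - m t i)) /
        ((1 - Real.exp (-(1 - α) * t)) * (Real.sqrt (v t i / (1 - Real.exp (-(1 - β) * t))) + ε))
      - (m t i) ^ 2 * ((1 - α) * Real.exp (-(1 - α) * t)) /
          ((1 - Real.exp (-(1 - α) * t)) ^ 2 *
            (Real.sqrt (v t i / (1 - Real.exp (-(1 - β) * t))) + ε))
      - (m t i) ^ 2 * (((1 - β) * ((G i) ^ 2 - v t i) * (1 - Real.exp (-(1 - β) * t))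
              - v t i * ((1 - β) * Real.exp (-(1 - β) * t))) / (1 - Real.exp (-(1 - β) * t)) ^ 2) /
          (2 * Real.sqrt (v t i / (1 - Real.exp (-(1 - β) * t))) * (1 - Real.exp (-(1 - α) * t)) *
            (Real.sqrt (v t i / (1 - Real.exp (-(1 - β) * t))) + ε) ^ 2)
    with hDi
  have hco : ∀ i : Fin d, HasDerivAt
      (fun s => m s i * ((m s i / (1 - Real.exp (-(1 - α) * s))) /
        (Real.sqrt (v s i / (1 - Real.exp (-(1 - β) * s))) + ε))) (Di i) t :=
    fun i => adam_coord_hasDerivAt (1 - α) (1 - β) ε t hα1 hβ1 hε ht _ _ _ _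
      (hmc i) (hvc i) (hvpos t ht i)
  have hsum : HasDerivAt
      (fun s => ∑ i, m s i * ((m s i / (1 - Real.exp (-(1 - α) * s))) /
        (Real.sqrt (v s i / (1 - Real.exp (-(1 - β) * s))) + ε))) (∑ i, Di i) t :=
    HasDerivAt.fun_sum fun i _ => hco i
  refine ⟨⟪G, (-η) • adamG α β ε d t (m t) (v t)⟫ + (η / (2 * (1 - α))) * ∑ i, Di i, ?_, ?_⟩
  · have hEq : (fun s => f (x s) + η / (2 * (1 - α)) * ⟪m s, adamG α β ε d s (m s) (v s)⟫)
        = fun s => f (x s) + η / (2 * (1 - α)) *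
            ∑ i, m s i * ((m s i / (1 - Real.exp (-(1 - α) * s))) /
              (Real.sqrt (v s i / (1 - Real.exp (-(1 - β) * s))) + ε)) := by
      funext s
      simp [adamG, PiLp.inner_apply, RCLike.inner_apply]
      left; exact Finset.sum_congr rfl fun i _ => by ring
    rw [hEq]
    exact hfd.add (hsum.const_mul (η / (2 * (1 - α))))
  · rw [inv_exp_sub_one (1 - α) t hα1 ht, inv_exp_sub_one (1 - β) t hβ1 ht]
    have hL : ⟪G, (-η) • adamG α β ε d t (m t) (v t)⟫
        = ∑ i, G i * (-η * ((m t i / (1 - Real.exp (-(1 - α) * t))) /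
            (Real.sqrt (v t i / (1 - Real.exp (-(1 - β) * t))) + ε))) := by
      simp [adamG, PiLp.inner_apply, RCLike.inner_apply, PiLp.smul_apply, smul_eq_mul]
      exact Finset.sum_congr rfl fun i _ => by ring
    have hR : ⟪m t, adamG α β ε d t (m t) (v t)⟫
        = ∑ i, m t i * ((m t i / (1 - Real.exp (-(1 - α) * t))) /
            (Real.sqrt (v t i / (1 - Real.exp (-(1 - β) * t))) + ε)) := by
      simp [adamG, PiLp.inner_apply, RCLike.inner_apply]
      exact Finset.sum_congr rfl fun i _ => by ring
    rw [hL, hR, Finset.mul_sum, Finset.mul_sum, ← Finset.sum_add_distrib]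
    apply Finset.sum_le_sum
    intro i _
    have hb := adam_coord_bound η (1 - α) (1 - β) ε t (m t i) (v t i) (G i)
      hη hα1 hβ1 hε ht (hvpos t ht i)
    simp only [hDi]
    linarith [hb]
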